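/- (Deterministic Lasso ℓ1 rate.) Under the setup of the previous statement (same model, penalty conditions λ/n ≥ c‖S‖_∞, loadings ℓΥ⁰ ≤ Υ ≤ uΥ⁰ with u ≥ 1 ≥ ℓ > 1/c, c > 1, and c₀ = (uc+1)/(ℓc−1)), the Lasso estimator satisfies ‖Υ⁰(β̂ − β₀)‖₁ ≤ 3c₀ (√s/κ_{2c₀}) ( (u + 1/c)λ√s/(n κ_{c₀}) + 2c_s ) + 3c₀ n c_s²/λ, where κ_{c₀} and κ_{2c₀} are the weighted restricted eigenvalues with constants c₀ and 2c₀ respectively, both assumed strictly positive. -/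

import Mathlib

set_option maxHeartbeats 8000000


/-- Empirical prediction norm `‖Fδ‖_{2,n} = ((1/n)∑ᵢ (fᵢ'δ)²)^{1/2}`. -/
noncomputable def predNorm (n p : ℕ) (F : Matrix (Fin n) (Fin p) ℝ)
    (δ : Fin p → ℝ) : ℝ :=
  Real.sqrt ((1 / (n : ℝ)) * ∑ i, (∑ j, F i j * δ j) ^ 2)

/-- Deterministic Lasso ℓ1 rate (Lemma 6, second claim):
`‖Υ⁰(β̂ − β₀)‖₁ ≤ 3c₀(√s/κ_{2c₀})((u + 1/c)λ√s/(nκ_{c₀}) + 2c_s) + 3c₀ n c_s²/λ`. -/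
theorem lasso_ell1_rate
    (n p s : ℕ) (hn : 0 < n)
    (f : Matrix (Fin n) (Fin p) ℝ)
    (β₀ : Fin p → ℝ) (T : Finset (Fin p))
    (hT : T = Finset.univ.filter (fun j => β₀ j ≠ 0)) (hTs : T.card ≤ s)
    (d a v : Fin n → ℝ)
    (hmodel : ∀ i, d i = (∑ j, f i j * β₀ j) + a i + v i)
    (cs : ℝ) (hcs0 : 0 ≤ cs)
    (hcs : Real.sqrt ((1 / (n : ℝ)) * ∑ i, (a i) ^ 2) ≤ cs)
    (Υ0 Υ : Fin p → ℝ) (hΥ0 : ∀ j, 0 < Υ0 j)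
    (c ℓ u lam : ℝ) (hc : 1 < c) (hu : 1 ≤ u) (hℓ1 : ℓ ≤ 1) (hℓc : 1 / c < ℓ)
    (hlampos : 0 < lam)
    (hload : ∀ j, ℓ * Υ0 j ≤ Υ j ∧ Υ j ≤ u * Υ0 j)
    (S : Fin p → ℝ)
    (hS : ∀ j, S j = 2 * ((1 / (n : ℝ)) * ∑ i, f i j * v i) / Υ0 j)
    (hlam : ∀ j, c * |S j| ≤ lam / n)
    (βhat : Fin p → ℝ)
    (hopt : ∀ β : Fin p → ℝ,
      (1 / (n : ℝ)) * (∑ i, (d i - ∑ j, f i j * βhat j) ^ 2)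
          + (lam / n) * ∑ j, Υ j * |βhat j|
        ≤ (1 / (n : ℝ)) * (∑ i, (d i - ∑ j, f i j * β j) ^ 2)
          + (lam / n) * ∑ j, Υ j * |β j|)
    (c0 κ1 κ2 : ℝ) (hc0 : c0 = (u * c + 1) / (ℓ * c - 1))
    (hκ1 : κ1 = sInf {r : ℝ | ∃ δ : Fin p → ℝ, δ ≠ 0 ∧
      (∑ j ∈ Tᶜ, |Υ0 j * δ j|) ≤ c0 * ∑ j ∈ T, |Υ0 j * δ j| ∧
      r = Real.sqrt s * predNorm n p f δ / ∑ j ∈ T, |Υ0 j * δ j|})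
    (hκ2 : κ2 = sInf {r : ℝ | ∃ δ : Fin p → ℝ, δ ≠ 0 ∧
      (∑ j ∈ Tᶜ, |Υ0 j * δ j|) ≤ (2 * c0) * ∑ j ∈ T, |Υ0 j * δ j| ∧
      r = Real.sqrt s * predNorm n p f δ / ∑ j ∈ T, |Υ0 j * δ j|})
    (hκ1pos : 0 < κ1) (hκ2pos : 0 < κ2) :
    (∑ j, Υ0 j * |βhat j - β₀ j|)
      ≤ 3 * c0 * (Real.sqrt s / κ2)
          * ((u + 1 / c) * (lam * Real.sqrt s) / (n * κ1) + 2 * cs)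
        + 3 * c0 * n * cs ^ 2 / lam := by

  classical
  -- basic positivity facts
  have hnpos : (0:ℝ) < n := by exact_mod_cast hn
  have hcpos : (0:ℝ) < c := lt_trans one_pos hc
  have hinvc : (0:ℝ) < 1 / c := by positivity
  have hℓpos : 0 < ℓ := lt_trans hinvc hℓc
  have hgap : 0 < ℓ - 1 / c := sub_pos.mpr hℓc
  have hgap' : 0 < ℓ * c - 1 := by
    have h := (div_lt_iff₀ hcpos).mp hℓc
    nlinarith
  have hc0pos : 0 < c0 := by
    rw [hc0]; apply div_pos (by nlinarith) hgap'
  have hc0ge1 : 1 ≤ c0 := by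
    rw [hc0, one_le_div hgap']; nlinarith
  have hc0id : c0 * (ℓ - 1 / c) = u + 1 / c := by
    rw [hc0]; field_simp
    exact div_self (ne_of_gt (by linarith [mul_comm c ℓ]))
  -- the error vector
  set δ : Fin p → ℝ := fun j => βhat j - β₀ j with hδdef
  set G : Fin n → ℝ := fun i => ∑ j, f i j * δ j with hGdef
  set nT : ℝ := ∑ j ∈ T, |Υ0 j * δ j| with hnTdef
  set nTc : ℝ := ∑ j ∈ Tᶜ, |Υ0 j * δ j| with hnTcdef
  have hnT0 : 0 ≤ nT := Finset.sum_nonneg fun j _ => abs_nonneg _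
  have hnTc0 : 0 ≤ nTc := Finset.sum_nonneg fun j _ => abs_nonneg _
  have hsplit : nT + nTc = ∑ j, |Υ0 j * δ j| :=
    Finset.sum_add_sum_compl T _
  have hgoalLHS : (∑ j, Υ0 j * |βhat j - β₀ j|) = nT + nTc := by
    rw [hsplit]
    refine Finset.sum_congr rfl fun j _ => ?_
    rw [abs_mul, abs_of_pos (hΥ0 j)]
  set FN : ℝ := predNorm n p f δ with hFNdef
  have hFN0 : 0 ≤ FN := Real.sqrt_nonneg _
  have hFNsq : FN ^ 2 = (1 / (n:ℝ)) * ∑ i, (G i) ^ 2 := by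
    rw [hFNdef]; unfold predNorm
    exact Real.sq_sqrt (by positivity)
  -- nonnegativity of the two RHS pieces
  have hA0 : 0 ≤ (u + 1 / c) * (lam * Real.sqrt s) / (n * κ1) :=
    div_nonneg (mul_nonneg (by linarith) (by positivity)) (by positivity)
  have hR1 : 0 ≤ 3 * c0 * (Real.sqrt s / κ2)
      * ((u + 1 / c) * (lam * Real.sqrt s) / (n * κ1) + 2 * cs) := by
    apply mul_nonneg (mul_nonneg (by linarith) (div_nonneg (Real.sqrt_nonneg _) hκ2pos.le))
    linarith
  have hR2 : 0 ≤ 3 * c0 * n * cs ^ 2 / lam := by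
    apply div_nonneg _ hlampos.le
    have : (0:ℝ) ≤ (n:ℝ) := hnpos.le
    positivity
  by_cases hδz : δ = 0
  · -- trivial case
    rw [hgoalLHS]
    have h1 : nT = 0 := by
      rw [hnTdef]; apply Finset.sum_eq_zero; intro j _; simp [hδz]
    have h2 : nTc = 0 := by
      rw [hnTcdef]; apply Finset.sum_eq_zero; intro j _; simp [hδz]
    rw [h1, h2]; linarith
  -- score identity and bound
  have hswap : ∑ i, v i * G i = ∑ j, (∑ i, f i j * v i) * δ j := by
    simp only [hGdef, Finset.mul_sum]
    rw [Finset.sum_comm]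
    refine Finset.sum_congr rfl fun j _ => ?_
    rw [Finset.sum_mul]
    exact Finset.sum_congr rfl fun i _ => by ring
  have hSid : ∀ j, S j * Υ0 j = 2 * ((1 / (n:ℝ)) * ∑ i, f i j * v i) := by
    intro j; rw [hS j]
    field_simp [(hΥ0 j).ne']
  have hscoreid : (2 / (n:ℝ)) * ∑ i, v i * G i = ∑ j, S j * (Υ0 j * δ j) := by
    rw [hswap, Finset.mul_sum]
    refine Finset.sum_congr rfl fun j _ => ?_
    linear_combination (-δ j) * hSid j
  have hscorebd : |(2 / (n:ℝ)) * ∑ i, v i * G i| ≤ lam / (c * n) * (nT + nTc) := by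
    rw [hscoreid, hsplit]
    calc |∑ j, S j * (Υ0 j * δ j)| ≤ ∑ j, |S j * (Υ0 j * δ j)| :=
          Finset.abs_sum_le_sum_abs _ _
      _ ≤ ∑ j, lam / (c * n) * |Υ0 j * δ j| := by
          refine Finset.sum_le_sum fun j _ => ?_
          rw [abs_mul]
          apply mul_le_mul_of_nonneg_right _ (abs_nonneg _)
          rw [le_div_iff₀ (by positivity : (0:ℝ) < c * n)]
          have h2 : c * |S j| * (n:ℝ) ≤ lam := (le_div_iff₀ hnpos).mp (hlam j)
          nlinarith
      _ = lam / (c * n) * ∑ j, |Υ0 j * δ j| := by rw [Finset.mul_sum]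
  -- Cauchy-Schwarz bound for the approximation error term
  have hCS : |(1 / (n:ℝ)) * ∑ i, a i * G i| ≤ cs * FN := by
    have h1 := Finset.sum_mul_sq_le_sq_mul_sq Finset.univ a G
    have h2 : ((1 / (n:ℝ)) * ∑ i, a i * G i) ^ 2
        ≤ ((1 / (n:ℝ)) * ∑ i, a i ^ 2) * ((1 / (n:ℝ)) * ∑ i, G i ^ 2) := by
      have hnn : (0:ℝ) ≤ (1 / (n:ℝ)) ^ 2 := sq_nonneg _
      nlinarith [mul_le_mul_of_nonneg_left h1 hnn]
    calc |(1 / (n:ℝ)) * ∑ i, a i * G i|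
        = Real.sqrt (((1 / (n:ℝ)) * ∑ i, a i * G i) ^ 2) := (Real.sqrt_sq_eq_abs _).symm
      _ ≤ Real.sqrt (((1 / (n:ℝ)) * ∑ i, a i ^ 2) * ((1 / (n:ℝ)) * ∑ i, G i ^ 2)) :=
          Real.sqrt_le_sqrt h2
      _ = Real.sqrt ((1 / (n:ℝ)) * ∑ i, a i ^ 2)
            * Real.sqrt ((1 / (n:ℝ)) * ∑ i, G i ^ 2) := Real.sqrt_mul (by positivity) _
      _ ≤ cs * FN := by
          apply mul_le_mul hcs _ (Real.sqrt_nonneg _) hcs0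
          rw [hFNdef]; unfold predNorm
          exact le_of_eq rfl
  -- optimality inequality
  have hd1 : ∀ i, d i - ∑ j, f i j * βhat j = a i + v i - G i := by
    intro i
    rw [hmodel i]
    have h : G i = ∑ j, f i j * βhat j - ∑ j, f i j * β₀ j := by
      simp only [hGdef]
      rw [← Finset.sum_sub_distrib]
      exact Finset.sum_congr rfl fun j _ => by simp [hδdef]; ring
    rw [h]; ring
  have hd2 : ∀ i, d i - ∑ j, f i j * β₀ j = a i + v i := by
    intro i; rw [hmodel i]; ring
  have hbasic : (1 / (n:ℝ)) * ∑ i, (G i) ^ 2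
      ≤ (2 / (n:ℝ)) * ∑ i, (a i + v i) * G i
        + (lam / n) * (∑ j, Υ j * |β₀ j| - ∑ j, Υ j * |βhat j|) := by
    have hopt0 := hopt β₀
    have e1 : ∑ i, (d i - ∑ j, f i j * βhat j) ^ 2
        = ∑ i, (a i + v i) ^ 2 - 2 * ∑ i, ((a i + v i) * G i) + ∑ i, (G i) ^ 2 := by
      rw [Finset.sum_congr rfl fun i (_ : i ∈ Finset.univ) => by rw [hd1 i]]
      rw [show (∑ i, (a i + v i - G i) ^ 2)
          = ∑ i, ((a i + v i) ^ 2 - 2 * ((a i + v i) * G i) + (G i) ^ 2) from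
          Finset.sum_congr rfl fun i _ => by ring]
      rw [Finset.sum_add_distrib, Finset.sum_sub_distrib, Finset.mul_sum]
    have e2 : ∑ i, (d i - ∑ j, f i j * β₀ j) ^ 2 = ∑ i, (a i + v i) ^ 2 :=
      Finset.sum_congr rfl fun i _ => by rw [hd2 i]
    rw [e1, e2] at hopt0
    have hh : (1 / (n:ℝ)) * (∑ i, (a i + v i) ^ 2 - 2 * ∑ i, ((a i + v i) * G i)
        + ∑ i, (G i) ^ 2)
        = (1 / (n:ℝ)) * ∑ i, (a i + v i) ^ 2 - (2 / (n:ℝ)) * ∑ i, ((a i + v i) * G i)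
          + (1 / (n:ℝ)) * ∑ i, (G i) ^ 2 := by ring
    rw [hh] at hopt0
    have hh2 : (lam / n) * (∑ j, Υ j * |β₀ j| - ∑ j, Υ j * |βhat j|)
        = (lam / n) * ∑ j, Υ j * |β₀ j| - (lam / n) * ∑ j, Υ j * |βhat j| := by ring
    rw [hh2]
    linarith
  -- penalty bound
  have hpen : ∑ j, Υ j * |β₀ j| - ∑ j, Υ j * |βhat j| ≤ u * nT - ℓ * nTc := by
    have hβ0c : ∀ j ∈ Tᶜ, β₀ j = 0 := by
      intro j hj
      by_contra h
      exact (Finset.mem_compl.mp hj) (by rw [hT]; simp [h])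
    have hsplit1 : ∑ j, Υ j * |β₀ j|
        = ∑ j ∈ T, Υ j * |β₀ j| + ∑ j ∈ Tᶜ, Υ j * |β₀ j| :=
      (Finset.sum_add_sum_compl T _).symm
    have hsplit2 : ∑ j, Υ j * |βhat j|
        = ∑ j ∈ T, Υ j * |βhat j| + ∑ j ∈ Tᶜ, Υ j * |βhat j| :=
      (Finset.sum_add_sum_compl T _).symm
    have h1 : ∑ j ∈ Tᶜ, Υ j * |β₀ j| = 0 :=
      Finset.sum_eq_zero fun j hj => by rw [hβ0c j hj]; simp
    have h2 : ℓ * nTc ≤ ∑ j ∈ Tᶜ, Υ j * |βhat j| := by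
      rw [hnTcdef, Finset.mul_sum]
      refine Finset.sum_le_sum fun j hj => ?_
      have hδj : δ j = βhat j := by simp [hδdef, hβ0c j hj]
      rw [abs_mul, abs_of_pos (hΥ0 j), hδj]
      have := (hload j).1
      nlinarith [abs_nonneg (βhat j), hΥ0 j]
    have h3 : ∑ j ∈ T, Υ j * |β₀ j| - ∑ j ∈ T, Υ j * |βhat j| ≤ u * nT := by
      rw [← Finset.sum_sub_distrib, hnTdef, Finset.mul_sum]
      refine Finset.sum_le_sum fun j _ => ?_
      have hΥpos : 0 < Υ j := lt_of_lt_of_le (mul_pos hℓpos (hΥ0 j)) (hload j).1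
      have habs : |β₀ j| - |βhat j| ≤ |δ j| := by
        have : |β₀ j| - |βhat j| ≤ |β₀ j - βhat j| := abs_sub_abs_le_abs_sub _ _
        have he : |β₀ j - βhat j| = |δ j| := by
          rw [hδdef]; simp only []
          rw [← abs_neg]; congr 1; ring
        linarith [he ▸ this]
      rw [abs_mul, abs_of_pos (hΥ0 j)]
      have := (hload j).2
      nlinarith [abs_nonneg (δ j)]
    linarith [hsplit1, hsplit2, h1, h2, h3]
  -- split the cross term
  have hsplitavG : ∑ i, (a i + v i) * G i = ∑ i, a i * G i + ∑ i, v i * G i := by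
    rw [← Finset.sum_add_distrib]
    exact Finset.sum_congr rfl fun i _ => by ring
  -- the key inequality
  have hkey : FN ^ 2 - 2 * cs * FN
      ≤ (lam / n) * (u + 1 / c) * nT - (lam / n) * (ℓ - 1 / c) * nTc := by
    have b1 : (2 / (n:ℝ)) * ∑ i, a i * G i ≤ 2 * cs * FN := by
      have := abs_le.mp hCS
      have h : (2 / (n:ℝ)) * ∑ i, a i * G i
          = 2 * ((1 / (n:ℝ)) * ∑ i, a i * G i) := by ring
      rw [h]; linarith [this.2]
    have b2 : (2 / (n:ℝ)) * ∑ i, v i * G i ≤ lam / (c * n) * (nT + nTc) :=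
      le_trans (le_abs_self _) hscorebd
    have b3 : (lam / n) * (∑ j, Υ j * |β₀ j| - ∑ j, Υ j * |βhat j|)
        ≤ (lam / n) * (u * nT - ℓ * nTc) :=
      mul_le_mul_of_nonneg_left hpen (le_of_lt (div_pos hlampos hnpos))
    have hsum : (2 / (n:ℝ)) * ∑ i, (a i + v i) * G i
        = (2 / (n:ℝ)) * ∑ i, a i * G i + (2 / (n:ℝ)) * ∑ i, v i * G i := by
      rw [hsplitavG]; ring
    have hmain : FN ^ 2 ≤ 2 * cs * FN + lam / (c * n) * (nT + nTc)
        + (lam / n) * (u * nT - ℓ * nTc) := by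
      rw [hFNsq]
      calc (1 / (n:ℝ)) * ∑ i, (G i) ^ 2
          ≤ (2 / (n:ℝ)) * ∑ i, (a i + v i) * G i
            + (lam / n) * (∑ j, Υ j * |β₀ j| - ∑ j, Υ j * |βhat j|) := hbasic
        _ ≤ 2 * cs * FN + lam / (c * n) * (nT + nTc)
            + (lam / n) * (u * nT - ℓ * nTc) := by
            rw [hsum] at *
            linarith
    have hring : lam / (c * n) * (nT + nTc) + (lam / n) * (u * nT - ℓ * nTc)
        = (lam / n) * (u + 1 / c) * nT - (lam / n) * (ℓ - 1 / c) * nTc := by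
      field_simp
      ring
    linarith [hmain, hring]
  have hkey2 : FN ^ 2 - 2 * cs * FN
      ≤ (lam / n) * ((ℓ - 1 / c) * (c0 * nT)) - (lam / n) * (ℓ - 1 / c) * nTc := by
    have e : (lam / n) * (u + 1 / c) * nT = (lam / n) * ((ℓ - 1 / c) * (c0 * nT)) := by
      rw [← hc0id]; ring
    linarith [hkey, e]
  -- restricted eigenvalue usage
  have hkappa : ∀ (C κ : ℝ),
      κ = sInf {r : ℝ | ∃ δ' : Fin p → ℝ, δ' ≠ 0 ∧
        (∑ j ∈ Tᶜ, |Υ0 j * δ' j|) ≤ C * ∑ j ∈ T, |Υ0 j * δ' j| ∧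
        r = Real.sqrt s * predNorm n p f δ' / ∑ j ∈ T, |Υ0 j * δ' j|} →
      nTc ≤ C * nT → κ * nT ≤ Real.sqrt s * FN := by
    intro C κ hκeq hcase
    have hnTpos : 0 < nT := by
      rcases lt_or_eq_of_le hnT0 with h | h
      · exact h
      · exfalso
        apply hδz
        have hzero : ∑ j, |Υ0 j * δ j| = 0 := by
          have h0 : C * nT = 0 := by rw [← h]; ring
          have hTc0 : nTc = 0 := le_antisymm (by linarith [hcase]) hnTc0
          rw [← hsplit, ← h, hTc0]; ring
        have hall := (Finset.sum_eq_zero_iff_of_nonneg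
          (fun j _ => abs_nonneg (Υ0 j * δ j))).mp hzero
        funext j
        have hj := hall j (Finset.mem_univ j)
        have := abs_eq_zero.mp hj
        rcases mul_eq_zero.mp this with h' | h'
        · exact absurd h' (ne_of_gt (hΥ0 j))
        · exact h'
    have hmem : (Real.sqrt s * FN / nT) ∈ {r : ℝ | ∃ δ' : Fin p → ℝ, δ' ≠ 0 ∧
        (∑ j ∈ Tᶜ, |Υ0 j * δ' j|) ≤ C * ∑ j ∈ T, |Υ0 j * δ' j| ∧
        r = Real.sqrt s * predNorm n p f δ' / ∑ j ∈ T, |Υ0 j * δ' j|} :=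
      ⟨δ, hδz, hcase, rfl⟩
    have hbdd : BddBelow {r : ℝ | ∃ δ' : Fin p → ℝ, δ' ≠ 0 ∧
        (∑ j ∈ Tᶜ, |Υ0 j * δ' j|) ≤ C * ∑ j ∈ T, |Υ0 j * δ' j| ∧
        r = Real.sqrt s * predNorm n p f δ' / ∑ j ∈ T, |Υ0 j * δ' j|} := by
      refine ⟨0, fun r hr => ?_⟩
      obtain ⟨δ', _, _, hr⟩ := hr
      rw [hr]
      apply div_nonneg (mul_nonneg (Real.sqrt_nonneg _) (Real.sqrt_nonneg _))
      exact Finset.sum_nonneg fun j _ => abs_nonneg _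
    have hle : κ ≤ Real.sqrt s * FN / nT := by
      rw [hκeq]; exact csInf_le hbdd hmem
    calc κ * nT ≤ (Real.sqrt s * FN / nT) * nT :=
          mul_le_mul_of_nonneg_right hle hnT0
      _ = Real.sqrt s * FN := div_mul_cancel₀ _ (ne_of_gt hnTpos)
  -- prediction rate
  have hpred : FN ≤ (u + 1 / c) * (lam * Real.sqrt s) / (n * κ1) + 2 * cs := by
    by_cases hcase : nTc ≤ c0 * nT
    · have hk := hkappa c0 κ1 hκ1 hcase
      have hnTle : nT ≤ Real.sqrt s * FN / κ1 := by
        rw [le_div_iff₀ hκ1pos]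
        linarith [hk]
      have hcoef : 0 ≤ (lam / n) * (u + 1 / c) := by
        apply mul_nonneg (le_of_lt (div_pos hlampos hnpos))
        linarith
      have h1 : FN ^ 2 ≤ (lam / n) * (u + 1 / c) * nT + 2 * cs * FN := by
        have h0 : 0 ≤ (lam / n) * (ℓ - 1 / c) * nTc :=
          mul_nonneg (mul_nonneg (le_of_lt (div_pos hlampos hnpos)) hgap.le) hnTc0
        linarith [hkey]
      have h2 : (lam / n) * (u + 1 / c) * nT
          ≤ (lam / n) * (u + 1 / c) * (Real.sqrt s * FN / κ1) :=
        mul_le_mul_of_nonneg_left hnTle hcoef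
      have h3 : (lam / n) * (u + 1 / c) * (Real.sqrt s * FN / κ1)
          = ((u + 1 / c) * (lam * Real.sqrt s) / (n * κ1)) * FN := by
        field_simp
      have h4 : FN ^ 2 ≤ ((u + 1 / c) * (lam * Real.sqrt s) / (n * κ1)) * FN
          + 2 * cs * FN := by
        rw [← h3]; linarith
      rcases eq_or_lt_of_le hFN0 with hz | hz
      · rw [← hz]; linarith
      · have h5 : FN * FN ≤ ((u + 1 / c) * (lam * Real.sqrt s) / (n * κ1) + 2 * cs) * FN := by
          calc FN * FN = FN ^ 2 := (pow_two FN).symm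
            _ ≤ ((u + 1 / c) * (lam * Real.sqrt s) / (n * κ1)) * FN + 2 * cs * FN := h4
            _ = ((u + 1 / c) * (lam * Real.sqrt s) / (n * κ1) + 2 * cs) * FN := by ring
        exact (mul_le_mul_iff_of_pos_right hz).mp h5
    · push_neg at hcase
      have hneg : (lam / n) * ((ℓ - 1 / c) * (c0 * nT)) - (lam / n) * (ℓ - 1 / c) * nTc
          ≤ 0 := by
        have h1 : (ℓ - 1 / c) * (c0 * nT) - (ℓ - 1 / c) * nTc ≤ 0 := by
          nlinarith [mul_pos hgap (sub_pos.mpr hcase)]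
        nlinarith [mul_nonneg (le_of_lt (div_pos hlampos hnpos)) (neg_nonneg.mpr h1)]
      have h2 : FN ^ 2 ≤ 2 * cs * FN := by linarith [hkey2]
      rcases eq_or_lt_of_le hFN0 with hz | hz
      · rw [← hz]; linarith
      · have h5 : FN * FN ≤ (2 * cs) * FN := by
          calc FN * FN = FN ^ 2 := (pow_two FN).symm
            _ ≤ 2 * cs * FN := h2
            _ = (2 * cs) * FN := by ring
        have h6 := (mul_le_mul_iff_of_pos_right hz).mp h5
        linarith
  -- final ℓ1 bound
  rw [hgoalLHS]
  by_cases hcase : nTc ≤ 2 * c0 * nT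
  · have hk := hkappa (2 * c0) κ2 hκ2 hcase
    have hnTle : nT ≤ Real.sqrt s * FN / κ2 := by
      rw [le_div_iff₀ hκ2pos]
      linarith only [hk]
    have hK0 : 0 ≤ 3 * c0 * (Real.sqrt s / κ2) :=
      mul_nonneg (by linarith only [hc0ge1]) (div_nonneg (Real.sqrt_nonneg _) hκ2pos.le)
    calc nT + nTc ≤ 3 * c0 * nT := by
          have hx : 0 ≤ (c0 - 1) * nT := mul_nonneg (by linarith only [hc0ge1]) hnT0
          have hx2 : (c0 - 1) * nT = c0 * nT - nT := by ring
          linarith only [hcase, hx, hx2]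
      _ ≤ 3 * c0 * (Real.sqrt s * FN / κ2) :=
          mul_le_mul_of_nonneg_left hnTle (by linarith only [hc0ge1])
      _ = (3 * c0 * (Real.sqrt s / κ2)) * FN := by
          field_simp
      _ ≤ (3 * c0 * (Real.sqrt s / κ2))
            * ((u + 1 / c) * (lam * Real.sqrt s) / (n * κ1) + 2 * cs) :=
          mul_le_mul_of_nonneg_left hpred hK0
      _ ≤ 3 * c0 * (Real.sqrt s / κ2)
            * ((u + 1 / c) * (lam * Real.sqrt s) / (n * κ1) + 2 * cs)
          + 3 * c0 * n * cs ^ 2 / lam := by linarith only [hR2]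
  · rw [not_le] at hcase
    have hstep1 : (lam / n) * ((ℓ - 1 / c) * (c0 * nT)) - (lam / n) * (ℓ - 1 / c) * nTc
        ≤ -((lam / n) * (ℓ - 1 / c) * (nTc / 2)) := by
      have h2 : (ℓ - 1 / c) * (c0 * nT) - (ℓ - 1 / c) * nTc
          ≤ -((ℓ - 1 / c) * (nTc / 2)) := by
        nlinarith only [mul_nonneg hgap.le
          (by linarith only [hcase] : (0:ℝ) ≤ nTc / 2 - c0 * nT)]
      nlinarith only [mul_le_mul_of_nonneg_left h2 (le_of_lt (div_pos hlampos hnpos))]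
    have hnTcbd : (lam / n) * (ℓ - 1 / c) * (nTc / 2) ≤ cs ^ 2 := by
      nlinarith only [hkey2, hstep1, sq_nonneg (FN - cs)]
    have hclear : nTc * (lam * (ℓ - 1 / c)) ≤ 2 * (n:ℝ) * cs ^ 2 := by
      have h := mul_le_mul_of_nonneg_left hnTcbd hnpos.le
      have e : (n:ℝ) * ((lam / n) * (ℓ - 1 / c) * (nTc / 2))
          = nTc * (lam * (ℓ - 1 / c)) / 2 := by
        field_simp
      rw [e] at h
      linarith only [h, sq_nonneg cs]
    have hcc : 2 * c0 + 1 ≤ 3 * c0 ^ 2 * (ℓ - 1 / c) := by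
      nlinarith only [hc0id, hc0ge1, hu, hinvc,
        mul_le_mul_of_nonneg_left hc0ge1
          (by linarith only [hu, hinvc] : (0:ℝ) ≤ 3 * (u + 1 / c) - 3)]
    have hfinal : (1 + 1 / (2 * c0)) * nTc ≤ 3 * c0 * n * cs ^ 2 / lam := by
      rw [le_div_iff₀ hlampos]
      have e4 : (1 + 1 / (2 * c0)) * nTc * lam = (2 * c0 + 1) * (nTc * lam) / (2 * c0) := by
        field_simp
      rw [e4, div_le_iff₀ (by linarith only [hc0ge1] : (0:ℝ) < 2 * c0)]
      have hmul1 : (2 * c0 + 1) * (nTc * lam)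
          ≤ (3 * c0 ^ 2 * (ℓ - 1 / c)) * (nTc * lam) :=
        mul_le_mul_of_nonneg_right hcc (mul_nonneg hnTc0 hlampos.le)
      have hmul2 : 3 * c0 ^ 2 * (nTc * (lam * (ℓ - 1 / c)))
          ≤ 3 * c0 ^ 2 * (2 * (n:ℝ) * cs ^ 2) :=
        mul_le_mul_of_nonneg_left hclear
          (by nlinarith only [hc0ge1] : (0:ℝ) ≤ 3 * c0 ^ 2)
      nlinarith only [hmul1, hmul2]
    have hL1a : nT + nTc ≤ (1 + 1 / (2 * c0)) * nTc := by
      have h : nT ≤ nTc / (2 * c0) := by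
        rw [le_div_iff₀ (by linarith only [hc0ge1] : (0:ℝ) < 2 * c0)]
        nlinarith only [hcase]
      have e : (1 + 1 / (2 * c0)) * nTc = nTc + nTc / (2 * c0) := by
        field_simp
      linarith only [h, e]
    linarith only [hfinal, hL1a, hR1]
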